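/- Let n ≥ 2 and let 1 ≤ i < j ≤ n. Set Y = E_{ij} + E_{ji} and Z = E_{ii} − E_{jj}, viewed as n×n complex matrices. Then tr([Y,Z]²) = −8 and tr(Y²)·tr(Z²) − (tr(YZ))² = 4; in particular tr([Y,Z]²) = −2·(tr(Y²)·tr(Z²) − (tr(YZ))²), so the extremal sectional curvature value −1/n of SL(n,ℝ)/SO(n) (with Killing-form metric B(X,Y) = 2n·tr(XY)) is attained on the tangent plane spanned by Y and Z. -/

import Mathlib

open Matrix

/-- For `n ≥ 2`, `i < j`, `Y = E_{ij} + E_{ji}`, `Z = E_{ii} − E_{jj}`,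
one has `tr([Y,Z]²) = −8` and `tr(Y²)·tr(Z²) − (tr(YZ))² = 4`; in particular
`tr([Y,Z]²) = −2·(tr(Y²)·tr(Z²) − (tr(YZ))²)`. -/
theorem stmt1 (n : ℕ) (hn : 2 ≤ n) (i j : Fin n) (hij : i < j)
    (Y Z : Matrix (Fin n) (Fin n) ℂ)
    (hY : Y = Matrix.single i j 1 + Matrix.single j i 1)
    (hZ : Z = Matrix.single i i 1 - Matrix.single j j 1) :
    ((Y * Z - Z * Y) * (Y * Z - Z * Y)).trace = -8 ∧
    (Y * Y).trace * (Z * Z).trace - ((Y * Z).trace) ^ 2 = 4 ∧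
    ((Y * Z - Z * Y) * (Y * Z - Z * Y)).trace =
      -2 * ((Y * Y).trace * (Z * Z).trace - ((Y * Z).trace) ^ 2) := by
  have hne : i ≠ j := hij.ne
  have hne' : j ≠ i := hij.ne'
  subst hY hZ
  simp only [add_mul, mul_add, sub_mul, mul_sub,
    Matrix.single_mul_single_same, Matrix.single_mul_single_of_ne, hne, hne',
    ne_eq, not_false_eq_true, trace_add, trace_sub,
    Matrix.trace_single_eq_of_ne _ _ _ hne,
    Matrix.trace_single_eq_of_ne _ _ _ hne',
    Matrix.trace_single_eq_same, trace_zero, mul_one, mul_zero, zero_mul]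
  norm_num
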